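/- For positive semidefinite matrices A and B with generalized geometric mean M(A,B) := √A·√(√(A⁺)·B·√(A⁺))·√A, one has supp(A) ∩ supp(B) ⊆ supp(M(A,B)) ⊆ supp(A). -/

import Mathlib

open scoped ComplexOrder

open Classical in
/-- The unique positive semidefinite square root of a positive semidefinite matrix
(junk value 0 otherwise). -/
noncomputable def psqrt {n : Type*} [Fintype n] [DecidableEq n] (X : Matrix n n ℂ) :
    Matrix n n ℂ :=
  if h : X.PosSemidef then (h.isHermitian.eigenvectorUnitary : Matrix n n ℂ) *
    Matrix.diagonal ((↑) ∘ Real.sqrt ∘ h.isHermitian.eigenvalues) *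
    (star h.isHermitian.eigenvectorUnitary : Matrix n n ℂ) else 0

/-- The range (support) of a matrix, i.e. the orthogonal complement of its kernel. -/
noncomputable def msupp {n : Type*} [Fintype n] [DecidableEq n] (X : Matrix n n ℂ) :
    Submodule ℂ (EuclideanSpace ℂ n) :=
  (LinearMap.ker (Matrix.toEuclideanLin X))ᗮ

/-- The kernel of a matrix, as a subspace of Euclidean space. -/
noncomputable def mker {n : Type*} [Fintype n] [DecidableEq n] (X : Matrix n n ℂ) :
    Submodule ℂ (EuclideanSpace ℂ n) :=
  LinearMap.ker (Matrix.toEuclideanLin X)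

/-- The generalized geometric mean M(A,B) = √A · √(√(A⁺) B √(A⁺)) · √A, where Ap
stands for the Moore–Penrose pseudoinverse A⁺ of A. -/
noncomputable def geoMean {n : Type*} [Fintype n] [DecidableEq n]
    (A Ap B : Matrix n n ℂ) : Matrix n n ℂ :=
  psqrt A * psqrt (psqrt Ap * B * psqrt Ap) * psqrt A

open Matrix in
/-- `Ap` is the Moore–Penrose pseudoinverse of `A` (the four Penrose conditions). -/
def IsMPInv {n : Type*} [Fintype n] [DecidableEq n] (A Ap : Matrix n n ℂ) : Prop :=
  A * Ap * A = A ∧ Ap * A * Ap = Ap ∧ (A * Ap)ᴴ = A * Ap ∧ (Ap * A)ᴴ = Ap * A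

section Aux

open Matrix

variable {n : Type*} [Fintype n] [DecidableEq n]

/-- Uniqueness of the Moore–Penrose pseudoinverse. -/
theorem isMPInv_unique {A B C : Matrix n n ℂ} (hB : IsMPInv A B) (hC : IsMPInv A C) :
    B = C := by
  obtain ⟨hB1, hB2, hB3, hB4⟩ := hB
  obtain ⟨hC1, hC2, hC3, hC4⟩ := hC
  have hAB : A * B = A * C := by
    calc A * B = (A * B)ᴴ := hB3.symm
    _ = Bᴴ * Aᴴ := by rw [conjTranspose_mul]
    _ = Bᴴ * (A * C * A)ᴴ := by rw [hC1]
    _ = Bᴴ * (Aᴴ * (A * C)ᴴ) := by rw [conjTranspose_mul]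
    _ = (Bᴴ * Aᴴ) * (A * C) := by rw [hC3, mul_assoc]
    _ = (A * B)ᴴ * (A * C) := by rw [conjTranspose_mul]
    _ = (A * B) * (A * C) := by rw [hB3]
    _ = (A * B * A) * C := by simp only [mul_assoc]
    _ = A * C := by rw [hB1]
  have hBA : B * A = C * A := by
    calc B * A = (B * A)ᴴ := hB4.symm
    _ = Aᴴ * Bᴴ := by rw [conjTranspose_mul]
    _ = (A * (C * A))ᴴ * Bᴴ := by rw [← mul_assoc, hC1]
    _ = ((C * A)ᴴ * Aᴴ) * Bᴴ := by rw [conjTranspose_mul]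
    _ = (C * A) * (Aᴴ * Bᴴ) := by rw [hC4, mul_assoc]
    _ = (C * A) * (B * A)ᴴ := by rw [conjTranspose_mul]
    _ = (C * A) * (B * A) := by rw [hB4]
    _ = C * (A * B * A) := by simp only [mul_assoc]
    _ = C * A := by rw [hB1]
  calc B = B * A * B := hB2.symm
  _ = (C * A) * B := by rw [hBA]
  _ = C * (A * B) := by rw [mul_assoc]
  _ = C * (A * C) := by rw [hAB]
  _ = C * A * C := by rw [mul_assoc]
  _ = C := hC2

/-- Conjugation of a real diagonal matrix by the eigenvector unitary of `hA`. -/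
noncomputable def cdiag {A : Matrix n n ℂ} (hA : A.IsHermitian) (g : n → ℝ) : Matrix n n ℂ :=
  (hA.eigenvectorUnitary : Matrix n n ℂ) * diagonal (RCLike.ofReal ∘ g) *
    (star hA.eigenvectorUnitary : Matrix n n ℂ)

lemma cdiag_mul {A : Matrix n n ℂ} (hA : A.IsHermitian) (g h : n → ℝ) :
    cdiag hA g * cdiag hA h = cdiag hA (fun i => g i * h i) := by
  set U := (hA.eigenvectorUnitary : Matrix n n ℂ) with hUdef
  have hU : star U * U = 1 := Matrix.mem_unitaryGroup_iff'.mp hA.eigenvectorUnitary.2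
  set D1 := diagonal (RCLike.ofReal ∘ g : n → ℂ) with hD1
  set D2 := diagonal (RCLike.ofReal ∘ h : n → ℂ) with hD2
  have key : (U * D1 * star U) * (U * D2 * star U) = U * (D1 * D2) * star U := by
    rw [mul_assoc (U * D1) (star U), ← mul_assoc (star U) (U * D2) (star U),
      ← mul_assoc (star U) U D2, hU, one_mul, ← mul_assoc (U * D1) D2 (star U),
      mul_assoc U D1 D2]
  unfold cdiag
  rw [← hUdef, ← hD1, ← hD2, key, hD1, hD2, diagonal_mul_diagonal]
  rw [show (fun i => (RCLike.ofReal ∘ g) i * (RCLike.ofReal ∘ h) i)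
      = (RCLike.ofReal ∘ fun i => g i * h i : n → ℂ) by funext i; simp]

lemma cdiag_psd {A : Matrix n n ℂ} (hA : A.IsHermitian) (g : n → ℝ) (hg : ∀ i, 0 ≤ g i) :
    (cdiag hA g).PosSemidef := by
  unfold cdiag
  rw [show (star hA.eigenvectorUnitary : Matrix n n ℂ)
      = ((hA.eigenvectorUnitary : Matrix n n ℂ))ᴴ from rfl]
  refine PosSemidef.mul_mul_conjTranspose_same ?_ _
  refine posSemidef_diagonal_iff.mpr fun i => ?_
  simpa using hg i

lemma spectral_cdiag {A : Matrix n n ℂ} (hA : A.IsHermitian) :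
    A = cdiag hA hA.eigenvalues := hA.spectral_theorem

lemma psqrt_eq {A : Matrix n n ℂ} (hA : A.PosSemidef) :
    psqrt A = cdiag hA.1 (fun i => Real.sqrt (hA.1.eigenvalues i)) := by
  rw [psqrt, dif_pos hA]; rfl

open scoped MatrixOrder in
lemma psqrt_eq_cfc_sqrt {X : Matrix n n ℂ} (hX : X.PosSemidef) : psqrt X = CFC.sqrt X := by
  rw [psqrt_eq hX, CFC.sqrt_eq_cfc, cfc_nnreal_eq_real _ X, hX.1.cfc_eq]
  simp only [IsHermitian.cfc, cdiag, Real.coe_sqrt, Real.coe_toNNReal', Function.comp_def]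
  rw [Unitary.conjStarAlgAut_apply]
  congr
  funext i
  simp [hX.eigenvalues_nonneg i]

open scoped MatrixOrder in
lemma psqrt_eq_of_sq {X R : Matrix n n ℂ} (hX : X.PosSemidef) (hR : R.PosSemidef)
    (h : R * R = X) : psqrt X = R := by
  rw [psqrt_eq_cfc_sqrt hX]
  exact (CFC.sqrt_eq_iff X R hX.nonneg hR.nonneg).mpr h

lemma psqrt_posSemidef {X : Matrix n n ℂ} (hX : X.PosSemidef) : (psqrt X).PosSemidef := by
  rw [psqrt_eq hX]; exact cdiag_psd _ _ (fun i => Real.sqrt_nonneg _)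

lemma psqrt_mul_self {X : Matrix n n ℂ} (hX : X.PosSemidef) : psqrt X * psqrt X = X := by
  rw [psqrt_eq hX, cdiag_mul]
  conv_rhs => rw [spectral_cdiag hX.1]
  exact congrArg _ (funext fun i => Real.mul_self_sqrt (hX.eigenvalues_nonneg i))

/-- The pseudoinverse of a psd matrix is the inverse on eigenvalues. -/
lemma cdiag_congr {A : Matrix n n ℂ} (hA : A.IsHermitian) {f g : n → ℝ}
    (h : ∀ i, f i = g i) : cdiag hA f = cdiag hA g :=
  congrArg _ (funext h)

lemma mpinv_eq_cdiag {A Ap : Matrix n n ℂ} (hA : A.PosSemidef) (hAp : IsMPInv A Ap) :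
    Ap = cdiag hA.1 (fun i => (hA.1.eigenvalues i)⁻¹) := by
  refine isMPInv_unique hAp ?_
  have hA' : A = cdiag hA.1 hA.1.eigenvalues := spectral_cdiag hA.1
  set l : n → ℝ := hA.1.eigenvalues with hl
  have hlam : ∀ i, 0 ≤ l i := hA.eigenvalues_nonneg
  have h1 : A * cdiag hA.1 (fun i => (l i)⁻¹) * A = A := by
    have : cdiag hA.1 l * cdiag hA.1 (fun i => (l i)⁻¹) * cdiag hA.1 l
        = cdiag hA.1 l := by
      rw [cdiag_mul, cdiag_mul]
      refine cdiag_congr _ fun i => ?_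
      rcases eq_or_ne (l i) 0 with h | h
      · simp [h]
      · field_simp
    rwa [← hA'] at this
  have h2 : cdiag hA.1 (fun i => (l i)⁻¹) * A * cdiag hA.1 (fun i => (l i)⁻¹)
      = cdiag hA.1 (fun i => (l i)⁻¹) := by
    have : cdiag hA.1 (fun i => (l i)⁻¹) * cdiag hA.1 l * cdiag hA.1 (fun i => (l i)⁻¹)
        = cdiag hA.1 (fun i => (l i)⁻¹) := by
      rw [cdiag_mul, cdiag_mul]
      refine cdiag_congr _ fun i => ?_
      rcases eq_or_ne (l i) 0 with h | h
      · simp [h]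
      · field_simp
    rwa [← hA'] at this
  have h3 : (A * cdiag hA.1 (fun i => (l i)⁻¹)).IsHermitian := by
    have : cdiag hA.1 l * cdiag hA.1 (fun i => (l i)⁻¹)
        = cdiag hA.1 (fun i => l i * (l i)⁻¹) := cdiag_mul _ _ _
    rw [← hA'] at this
    rw [this]
    exact (cdiag_psd hA.1 _ (fun i => mul_nonneg (hlam i) (inv_nonneg.mpr (hlam i)))).1
  have h4 : (cdiag hA.1 (fun i => (l i)⁻¹) * A).IsHermitian := by
    have : cdiag hA.1 (fun i => (l i)⁻¹) * cdiag hA.1 l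
        = cdiag hA.1 (fun i => (l i)⁻¹ * l i) := cdiag_mul _ _ _
    rw [← hA'] at this
    rw [this]
    exact (cdiag_psd hA.1 _ (fun i => mul_nonneg (inv_nonneg.mpr (hlam i)) (hlam i))).1
  exact ⟨h1, h2, h3, h4⟩

lemma herm_dot {S : Matrix n n ℂ} (hS : S.IsHermitian) (u v : n → ℂ) :
    star u ⬝ᵥ (S *ᵥ v) = star (S *ᵥ u) ⬝ᵥ v := by
  rw [star_mulVec, hS, dotProduct_mulVec]

lemma toEuclideanLin_eq_zero_iff (X : Matrix n n ℂ) (x : EuclideanSpace ℂ n) :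
    Matrix.toEuclideanLin X x = 0 ↔ X *ᵥ (WithLp.equiv 2 (n → ℂ) x) = 0 := by
  rw [Matrix.toEuclideanLin_apply]
  constructor
  · intro h
    simpa using congrArg (WithLp.equiv 2 (n → ℂ)) h
  · intro h
    simpa using h

end Aux

open Matrix in
/-- supp(A) ∩ supp(B) ⊆ supp(M(A,B)) ⊆ supp(A) for the generalized geometric mean. -/
theorem supp_geoMean_between
    {n : Type*} [Fintype n] [DecidableEq n]
    (A B Ap : Matrix n n ℂ) (hA : A.PosSemidef) (hB : B.PosSemidef)
    (hAp : IsMPInv A Ap) :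
    msupp A ⊓ msupp B ≤ msupp (geoMean A Ap B) ∧ msupp (geoMean A Ap B) ≤ msupp A := by
  have hlam : ∀ i, 0 ≤ hA.1.eigenvalues i := hA.eigenvalues_nonneg
  have hApeq : Ap = cdiag hA.1 (fun i => (hA.1.eigenvalues i)⁻¹) := mpinv_eq_cdiag hA hAp
  have hApPsd : Ap.PosSemidef := hApeq ▸ cdiag_psd _ _ (fun i => inv_nonneg.mpr (hlam i))
  have hS : psqrt A = cdiag hA.1 (fun i => Real.sqrt (hA.1.eigenvalues i)) := psqrt_eq hA
  have hSpsd : (psqrt A).PosSemidef := psqrt_posSemidef hA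
  have hQ : psqrt Ap = cdiag hA.1 (fun i => (Real.sqrt (hA.1.eigenvalues i))⁻¹) := by
    refine psqrt_eq_of_sq hApPsd (cdiag_psd _ _ (fun i => inv_nonneg.mpr (Real.sqrt_nonneg _))) ?_
    rw [cdiag_mul, hApeq]
    refine cdiag_congr _ fun i => ?_
    rw [← mul_inv, Real.mul_self_sqrt (hlam i)]
  have hQpsd : (psqrt Ap).PosSemidef := psqrt_posSemidef hApPsd
  have hAeq : A = cdiag hA.1 hA.1.eigenvalues := spectral_cdiag hA.1
  have h2 : A * Ap = cdiag hA.1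
      (fun i => hA.1.eigenvalues i * (hA.1.eigenvalues i)⁻¹) := by
    have := cdiag_mul hA.1 hA.1.eigenvalues (fun i => (hA.1.eigenvalues i)⁻¹)
    rwa [← hAeq, ← hApeq] at this
  have h3 : Ap * A = cdiag hA.1
      (fun i => (hA.1.eigenvalues i)⁻¹ * hA.1.eigenvalues i) := by
    have := cdiag_mul hA.1 (fun i => (hA.1.eigenvalues i)⁻¹) hA.1.eigenvalues
    rwa [← hAeq, ← hApeq] at this
  have hQS : psqrt Ap * psqrt A = A * Ap := by
    rw [hQ, hS, cdiag_mul, h2]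
    refine cdiag_congr _ fun i => ?_
    rcases eq_or_ne (hA.1.eigenvalues i) 0 with h | h
    · simp [h]
    · have hs : Real.sqrt (hA.1.eigenvalues i) ≠ 0 :=
        Real.sqrt_ne_zero'.mpr (lt_of_le_of_ne (hlam i) (Ne.symm h))
      rw [inv_mul_cancel₀ hs, mul_inv_cancel₀ h]
  have hAP : A * (A * Ap) = A := by
    have hcomm : A * Ap = Ap * A := by
      rw [h2, h3]
      exact cdiag_congr _ fun i => mul_comm _ _
    rw [hcomm, ← mul_assoc, hAp.1]
  set C0 : Matrix n n ℂ := psqrt Ap * B * psqrt Ap with hC0def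
  have hC0 : C0.PosSemidef := by
    have := hB.mul_mul_conjTranspose_same (psqrt Ap)
    rwa [hQpsd.1] at this
  set C : Matrix n n ℂ := psqrt C0 with hCdef
  have hCpsd : C.PosSemidef := psqrt_posSemidef hC0
  have hCC : C * C = C0 := psqrt_mul_self hC0
  have hSS : psqrt A * psqrt A = A := psqrt_mul_self hA
  have key : ∀ xv : n → ℂ, geoMean A Ap B *ᵥ xv = 0 → B *ᵥ ((A * Ap) *ᵥ xv) = 0 := by
    intro xv hx
    set sx := psqrt A *ᵥ xv with hsx
    have h0 : psqrt A *ᵥ (C *ᵥ sx) = 0 := by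
      rw [hsx, mulVec_mulVec, mulVec_mulVec]
      exact hx
    have h2 : star sx ⬝ᵥ (C *ᵥ sx) = 0 := by
      rw [← herm_dot hSpsd.1, h0, dotProduct_zero]
    have h3 : C *ᵥ sx = 0 := (hCpsd.dotProduct_mulVec_zero_iff sx).mp h2
    have h4 : C0 *ᵥ sx = 0 := by rw [← hCC, ← mulVec_mulVec, h3, mulVec_zero]
    have h6 : star (psqrt Ap *ᵥ sx) ⬝ᵥ (B *ᵥ (psqrt Ap *ᵥ sx)) = 0 := by
      have hrw : C0 *ᵥ sx = psqrt Ap *ᵥ (B *ᵥ (psqrt Ap *ᵥ sx)) := by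
        rw [hC0def, ← mulVec_mulVec, ← mulVec_mulVec]
      rw [← herm_dot hQpsd.1, ← hrw, h4, dotProduct_zero]
    have h7 : B *ᵥ (psqrt Ap *ᵥ sx) = 0 := (hB.dotProduct_mulVec_zero_iff _).mp h6
    rw [hsx, mulVec_mulVec, mulVec_mulVec, mul_assoc, hQS] at h7
    rwa [mulVec_mulVec]
  constructor
  · intro y hy
    rw [Submodule.mem_inf] at hy
    obtain ⟨hyA, hyB⟩ := hy
    rw [msupp] at hyA hyB ⊢
    rw [Submodule.mem_orthogonal] at hyA hyB ⊢
    intro x hx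
    rw [LinearMap.mem_ker, toEuclideanLin_eq_zero_iff] at hx
    set xv := WithLp.equiv 2 (n → ℂ) x with hxv
    set yv := WithLp.equiv 2 (n → ℂ) y with hyv
    have hPxB : B *ᵥ ((A * Ap) *ᵥ xv) = 0 := key xv hx
    have hwA : A *ᵥ (xv - (A * Ap) *ᵥ xv) = 0 := by
      rw [mulVec_sub, mulVec_mulVec, hAP, sub_self]
    have hu0 : (star ((A * Ap) *ᵥ xv) : n → ℂ) ⬝ᵥ yv = 0 := by
      have hmem : (WithLp.equiv 2 (n → ℂ)).symm ((A * Ap) *ᵥ xv)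
          ∈ LinearMap.ker (Matrix.toEuclideanLin B) := by
        rw [LinearMap.mem_ker, toEuclideanLin_eq_zero_iff]
        simpa using hPxB
      have := hyB _ hmem
      rw [EuclideanSpace.inner_eq_star_dotProduct] at this
      rw [hyv, dotProduct_comm]; simpa using this
    have hw0 : (star (xv - (A * Ap) *ᵥ xv) : n → ℂ) ⬝ᵥ yv = 0 := by
      have hmem : (WithLp.equiv 2 (n → ℂ)).symm (xv - (A * Ap) *ᵥ xv)
          ∈ LinearMap.ker (Matrix.toEuclideanLin A) := by
        rw [LinearMap.mem_ker, toEuclideanLin_eq_zero_iff]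
        simpa using hwA
      have := hyA _ hmem
      rw [EuclideanSpace.inner_eq_star_dotProduct] at this
      rw [hyv, dotProduct_comm]; simpa using this
    rw [EuclideanSpace.inner_eq_star_dotProduct, dotProduct_comm]
    have hsplit : (star xv : n → ℂ) ⬝ᵥ yv
        = star ((A * Ap) *ᵥ xv) ⬝ᵥ yv + star (xv - (A * Ap) *ᵥ xv) ⬝ᵥ yv := by
      rw [← add_dotProduct, ← star_add, add_sub_cancel]
    exact hsplit.trans (by rw [hu0, hw0, add_zero])
  · have hker : LinearMap.ker (Matrix.toEuclideanLin A)
        ≤ LinearMap.ker (Matrix.toEuclideanLin (geoMean A Ap B)) := by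
      intro x hx
      rw [LinearMap.mem_ker, toEuclideanLin_eq_zero_iff] at hx ⊢
      set xv := WithLp.equiv 2 (n → ℂ) x with hxv
      have hsx : psqrt A *ᵥ xv = 0 := by
        have h1 : star (psqrt A *ᵥ xv) ⬝ᵥ (psqrt A *ᵥ xv) = 0 := by
          rw [← herm_dot hSpsd.1, mulVec_mulVec, hSS, hx, dotProduct_zero]
        exact dotProduct_star_self_eq_zero.mp h1
      show (psqrt A * C * psqrt A) *ᵥ xv = 0
      rw [← mulVec_mulVec, ← mulVec_mulVec, hsx, mulVec_zero, mulVec_zero]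
    exact Submodule.orthogonal_le hker
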